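/- arXiv:2512.01969 — 3 statements merged into one kernel-verified Lean document; each statement's English description precedes it below -/
import Mathlib

section
/- Let n ≥ 2, let P = (p_{i1 i2 i3 i4}) be a 4th order, n-dimensional stochastic tensor (the transition tensor of a third order Markov chain on S = {1,…,n}), and let Q be its reduced transition matrix. Then for all i1, i2, i3, i4 ∈ S, the 2-step transition probability satisfies p^{(2)}_{i1 i2 i3 i4} = Σ_{j1 ∈ S} (Q^2)_{(i1,j1,i2),(i2,i3,i4)}. -/
open Finset

/-- A 4th order, `n`-dimensional tensor: entry `p_{i₁ i₂ i₃ i₄}` is `P i₁ i₂ i₃ i₄`. -/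
abbrev Tensor4 (n : ℕ) := Fin n → Fin n → Fin n → Fin n → ℝ

/-- `P` is a stochastic tensor. -/
def IsStochastic4 {n : ℕ} (P : Tensor4 n) : Prop :=
  (∀ i₁ i₂ i₃ i₄, 0 ≤ P i₁ i₂ i₃ i₄ ∧ P i₁ i₂ i₃ i₄ ≤ 1) ∧
  ∀ i₂ i₃ i₄, ∑ i₁ : Fin n, P i₁ i₂ i₃ i₄ = 1

/-- The product `A ⊠ B`. -/
def tmul4 {n : ℕ} (A B : Tensor4 n) : Tensor4 n :=
  fun i₁ i₂ i₃ i₄ => ∑ j : Fin n, A i₁ j i₂ i₃ * B j i₂ i₃ i₄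

/-- Tensor powers: `tpow4 P k` is `P^k`, with entries the `k`-step transition
probabilities `p^{(k)}_{i₁ i₂ i₃ i₄}`; `P^0` is the identity tensor. -/
def tpow4 {n : ℕ} (P : Tensor4 n) : ℕ → Tensor4 n
  | 0 => fun i₁ i₂ _ _ => if i₁ = i₂ then 1 else 0
  | k + 1 => tmul4 (tpow4 P k) P

/-- The reduced transition matrix `Q` of a third order chain: rows and columns are
indexed by triples, `Q (i₁,i₂,i₃) (j₁,j₂,j₃) = p_{i₁ i₂ i₃ j₃}` if `j₁ = i₂` and
`j₂ = i₃`, and `0` otherwise. -/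
def reduced4 {n : ℕ} (P : Tensor4 n) :
    Matrix (Fin n × Fin n × Fin n) (Fin n × Fin n × Fin n) ℝ :=
  fun r c => if c.1 = r.2.1 ∧ c.2.1 = r.2.2 then P r.1 r.2.1 r.2.2 c.2.2 else 0

/-- `p^{(2)}_{i₁ i₂ i₃ i₄} = Σ_{j₁ ∈ S} (Q²)_{(i₁,j₁,i₂),(i₂,i₃,i₄)}`. -/
theorem two_step_via_reduced {n : ℕ} (hn : 2 ≤ n) (P : Tensor4 n)
    (hP : IsStochastic4 P) (i₁ i₂ i₃ i₄ : Fin n) :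
    tpow4 P 2 i₁ i₂ i₃ i₄ =
      ∑ j₁ : Fin n, (reduced4 P ^ 2) (i₁, j₁, i₂) (i₂, i₃, i₄) := by
  simp only [pow_two, Matrix.mul_apply, Fintype.sum_prod_type, reduced4, tpow4, tmul4]
  simp [Finset.mul_sum]
  refine Finset.sum_congr rfl fun x _ => ?_
  rw [Finset.sum_eq_single x (fun b _ hb => by simp [hb]) (by simp)]
  rw [Finset.sum_eq_single i₂ (fun b _ hb => by simp [Ne.symm hb]) (by simp)]
  rw [Finset.sum_eq_single i₃ (fun b _ hb => by simp [Ne.symm hb]) (by simp)]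
  simp
end

section
/- Let n ≥ 2, let P = (p_{i1 i2 i3 i4}) be a 4th order, n-dimensional stochastic tensor (the transition tensor of a third order Markov chain on S = {1,…,n}), and let Q be its reduced transition matrix. Then for every integer k ≥ 3 and all i1, i2, i3, i4 ∈ S, the k-step transition probability satisfies p^{(k)}_{i1 i2 i3 i4} = Σ_{j2 ∈ S} Σ_{j1 ∈ S} (Q^k)_{(i1,j1,j2),(i2,i3,i4)}. -/
open Finset

lemma k_step_aux {n : ℕ} (P : Tensor4 n) (k : ℕ) (i₁ i₂ i₃ i₄ : Fin n) :
    tpow4 P k i₁ i₂ i₃ i₄ =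
      ∑ j₂ : Fin n, ∑ j₁ : Fin n, (reduced4 P ^ k) (i₁, j₁, j₂) (i₂, i₃, i₄) := by
  induction k generalizing i₂ i₃ i₄ with
  | zero =>
    simp [tpow4, Matrix.one_apply, Prod.ext_iff, ite_and]
  | succ k ih =>
    rw [pow_succ]
    simp only [Matrix.mul_apply, Fintype.sum_prod_type, reduced4, mul_ite, mul_zero,
      ite_and, Finset.sum_ite_irrel, Finset.sum_const_zero, Finset.sum_ite_eq,
      Finset.mem_univ, if_true]
    show (∑ a : Fin n, tpow4 P k i₁ a i₂ i₃ * P a i₂ i₃ i₄) = _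
    simp only [ih, Finset.sum_mul]
    rw [Finset.sum_comm]
    exact Finset.sum_congr rfl fun j₂ _ => Finset.sum_comm

/-- for every `k ≥ 3`,
`p^{(k)}_{i₁ i₂ i₃ i₄} = Σ_{j₂ ∈ S} Σ_{j₁ ∈ S} (Q^k)_{(i₁,j₁,j₂),(i₂,i₃,i₄)}`. -/
theorem k_step_via_reduced {n : ℕ} (hn : 2 ≤ n) (P : Tensor4 n)
    (hP : IsStochastic4 P) (k : ℕ) (hk : 3 ≤ k) (i₁ i₂ i₃ i₄ : Fin n) :
    tpow4 P k i₁ i₂ i₃ i₄ =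
      ∑ j₂ : Fin n, ∑ j₁ : Fin n, (reduced4 P ^ k) (i₁, j₁, j₂) (i₂, i₃, i₄) :=
  k_step_aux P k i₁ i₂ i₃ i₄
end

section
/- Let n ≥ 2, let P = (p_{i1 i2 i3 i4}) be a 4th order, n-dimensional stochastic tensor, and let Q be its reduced transition matrix. Then for all triples (i1,i2,i3) and (j1,j2,j3) from S = {1,…,n}, the (row (i1,i2,i3), column (j1,j2,j3)) entry of Q^3 equals p_{i1 i2 i3 j1} · p_{i2 i3 j1 j2} · p_{i3 j1 j2 j3}. -/
open Finset

/-- `(Q³)_{(i₁,i₂,i₃),(j₁,j₂,j₃)} = p_{i₁ i₂ i₃ j₁} p_{i₂ i₃ j₁ j₂} p_{i₃ j₁ j₂ j₃}`. -/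
theorem reduced_cube_entry {n : ℕ} (hn : 2 ≤ n) (P : Tensor4 n)
    (hP : IsStochastic4 P) (i₁ i₂ i₃ j₁ j₂ j₃ : Fin n) :
    (reduced4 P ^ 3) (i₁, i₂, i₃) (j₁, j₂, j₃) =
      P i₁ i₂ i₃ j₁ * P i₂ i₃ j₁ j₂ * P i₃ j₁ j₂ j₃ := by
  rw [pow_succ, pow_succ, pow_one]
  simp only [Matrix.mul_apply, reduced4, Fintype.sum_prod_type]
  simp [ite_and, Finset.mul_sum, Finset.sum_mul, mul_comm]
end
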